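/- arXiv:1209.1059 — 2 statements merged into one kernel-verified Lean document; each statement's English description precedes it below -/
import Mathlib

section
/- Consider W(X, A, B) = f·X + λ·X·A·B with f, λ ∈ ℂ nonzero. Then the set of critical points of W (points where ∂W/∂X = ∂W/∂A = ∂W/∂B = 0) is exactly { (X, A, B) : X = 0 and A·B = −f/λ }; in particular it is nonempty. -/
lemma d1 (f lam A B : ℂ) (X : ℂ) :
    deriv (fun x : ℂ => f * x + lam * x * A * B) X = f + lam * A * B := by
  have : (fun x : ℂ => f * x + lam * x * A * B)
      = fun x : ℂ => (f + lam * A * B) * x := by funext x; ring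
  rw [this, deriv_const_mul_field]; simp

lemma d2 (f lam X B : ℂ) (A : ℂ) :
    deriv (fun a : ℂ => f * X + lam * X * a * B) A = lam * X * B := by
  have : (fun a : ℂ => f * X + lam * X * a * B)
      = fun a : ℂ => (lam * X * B) * a + f * X := by funext a; ring
  rw [this, deriv_add_const, deriv_const_mul_field]; simp

lemma d3 (f lam X A : ℂ) (B : ℂ) :
    deriv (fun b : ℂ => f * X + lam * X * A * b) B = lam * X * A := by
  have : (fun b : ℂ => f * X + lam * X * A * b)
      = fun b : ℂ => (lam * X * A) * b + f * X := by funext b; ring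
  rw [this, deriv_add_const, deriv_const_mul_field]; simp

/-- For `W = f·X + λ·X·A·B` with `f, λ ≠ 0`, the set of critical points is exactly
`{(X,A,B) : X = 0 ∧ A·B = -f/λ}`, which is nonempty. -/
theorem critical_points_of_fX_plus_lXAB (f lam : ℂ) (hf : f ≠ 0) (hl : lam ≠ 0)
    (W : ℂ → ℂ → ℂ → ℂ) (hW : W = fun X A B => f * X + lam * X * A * B) :
    (∀ X A B : ℂ,
      (deriv (fun x => W x A B) X = 0 ∧ deriv (fun a => W X a B) A = 0 ∧
        deriv (fun b => W X A b) B = 0) ↔ (X = 0 ∧ A * B = -f / lam)) ∧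
    ∃ X A B : ℂ,
      deriv (fun x => W x A B) X = 0 ∧ deriv (fun a => W X a B) A = 0 ∧
        deriv (fun b => W X A b) B = 0 := by
  subst hW
  have key : ∀ X A B : ℂ,
      (deriv (fun x => f * x + lam * x * A * B) X = 0 ∧
        deriv (fun a => f * X + lam * X * a * B) A = 0 ∧
        deriv (fun b => f * X + lam * X * A * b) B = 0) ↔ (X = 0 ∧ A * B = -f / lam) := by
    intro X A B
    rw [d1, d2, d3]
    constructor
    · rintro ⟨h1, h2, h3⟩
      have hAB : A * B = -f / lam := by rw [eq_div_iff hl]; linear_combination h1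
      have hA : A ≠ 0 := by
        intro h; exact hf (by linear_combination h1 - lam*B*h)
      refine ⟨?_, hAB⟩
      have := mul_eq_zero.mp h3
      rcases this with h | h
      · rcases mul_eq_zero.mp h with h | h
        · exact absurd h hl
        · exact h
      · exact absurd h hA
    · rintro ⟨hX, hAB⟩
      subst hX
      refine ⟨?_, by ring, by ring⟩
      rw [mul_assoc, hAB]; field_simp; ring
  exact ⟨key, 0, 1, -f/lam, (key 0 1 (-f/lam)).mpr ⟨rfl, one_mul _⟩⟩
end

section
/- Suppose W(z_1, …, z_d) = x · g(y_1, …, y_{d−1}) under the (local, away from z_d = 0) change of variables x = z_d^{2/r_d}, y_i = z_i / z_d^{r_i/r_d} (all r_i rational, r_d ≠ 0), with g holomorphic. Then at any point with x ≠ 0, the conditions ∂W/∂z_i = 0 for all i = 1, …, d are equivalent to g(y) = 0 together with ∂g/∂y_i = 0 for all i = 1, …, d−1. -/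
open Complex

lemma ns_hasDerivAt_update {n : ℕ} (g : (Fin n → ℂ) → ℂ) (hg : Differentiable ℂ g)
    (y : Fin n → ℂ) (i : Fin n) :
    HasDerivAt (fun w => g (Function.update y i w))
      ((fderiv ℂ g y) (Pi.single i 1)) (y i) := by
  have hu : HasDerivAt (fun w : ℂ => Function.update y i w) (Pi.single i 1) (y i) := by
    have h1 : (fun w : ℂ => Function.update y i w)
        = fun w : ℂ => y + (w - y i) • (Pi.single i (1 : ℂ) : Fin n → ℂ) := by
      funext w
      funext j
      by_cases hj : j = i
      · subst hj; simp
      · simp [Function.update_of_ne hj, Pi.single_eq_of_ne hj]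
    rw [h1]
    have h2 : HasDerivAt (fun w : ℂ => (w - y i)) 1 (y i) :=
      (hasDerivAt_id (y i)).sub_const (y i)
    simpa using (h2.smul_const (Pi.single i (1:ℂ))).const_add y
  have := ((hg (Function.update y i (y i))).hasFDerivAt).comp_hasDerivAt (y i) hu
  simp only [Function.update_eq_self] at this
  exact this

lemma ns_fderiv_eq_zero {n : ℕ} (g : (Fin n → ℂ) → ℂ) (hg : Differentiable ℂ g)
    (y : Fin n → ℂ)
    (h : ∀ i, deriv (fun w => g (Function.update y i w)) (y i) = 0) :
    fderiv ℂ g y = 0 := by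
  have hb : ∀ i, (fderiv ℂ g y) (Pi.single i 1) = 0 := by
    intro i
    rw [← (ns_hasDerivAt_update g hg y i).deriv]
    exact h i
  have hb' : ∀ i, (fderiv ℂ g y) (fun j => if i = j then (1:ℂ) else 0) = 0 := by
    intro i
    convert hb i using 2
    funext j
    simp [Pi.single_apply, eq_comm]
  ext v
  rw [pi_eq_sum_univ v]
  simp [map_sum, hb']

noncomputable def nsA (d : ℕ) (r : Fin (d + 1) → ℚ) (i : Fin d) : ℂ :=
  ((r i.castSucc / r (Fin.last d) : ℚ) : ℂ)


/-- The Nelson–Seiberg change of variables: away from the singular locus `z_d = 0`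
(with the principal branch of fractional powers), if `W(z) = x·g(y)` with
`x = z_d^(2/r_d)` and `y_i = z_i / z_d^(r_i/r_d)`, then at a point with `x ≠ 0` the
SUSY equations `∂W/∂z_i = 0` (for all `i`) are equivalent to `g(y) = 0` together with
`∂g/∂y_i = 0` (for all `i`). -/
theorem nelson_seiberg_change_of_variables (d : ℕ) (r : Fin (d + 1) → ℚ)
    (hrd : r (Fin.last d) ≠ 0)
    (g : (Fin d → ℂ) → ℂ) (hg : Differentiable ℂ g)
    (W : (Fin (d + 1) → ℂ) → ℂ)
    (hW : ∀ z : Fin (d + 1) → ℂ, z (Fin.last d) ≠ 0 →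
      W z = z (Fin.last d) ^ (((2 / r (Fin.last d) : ℚ) : ℂ)) *
        g (fun i : Fin d =>
          z i.castSucc / z (Fin.last d) ^ (((r i.castSucc / r (Fin.last d) : ℚ) : ℂ))))
    (z : Fin (d + 1) → ℂ) (hzd : z (Fin.last d) ≠ 0)
    (hbranch : z (Fin.last d) ∈ Complex.slitPlane)
    (hx : z (Fin.last d) ^ (((2 / r (Fin.last d) : ℚ) : ℂ)) ≠ 0) :
    (∀ i : Fin (d + 1), deriv (fun w => W (Function.update z i w)) (z i) = 0) ↔
      (g (fun i : Fin d =>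
          z i.castSucc / z (Fin.last d) ^ (((r i.castSucc / r (Fin.last d) : ℚ) : ℂ))) = 0 ∧
       ∀ j : Fin d,
        deriv (fun w => g (Function.update
            (fun i : Fin d => z i.castSucc /
              z (Fin.last d) ^ (((r i.castSucc / r (Fin.last d) : ℚ) : ℂ))) j w))
          ((fun i : Fin d => z i.castSucc /
              z (Fin.last d) ^ (((r i.castSucc / r (Fin.last d) : ℚ) : ℂ))) j) = 0) := by
  classical
  have haux : ∀ i : Fin d, ((r i.castSucc / r (Fin.last d) : ℚ) : ℂ) = nsA d r i :=
    fun _ => rfl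
  have hWa : ∀ z : Fin (d + 1) → ℂ, z (Fin.last d) ≠ 0 →
      W z = z (Fin.last d) ^ (((2 / r (Fin.last d) : ℚ) : ℂ)) *
        g (fun i : Fin d => z i.castSucc / z (Fin.last d) ^ nsA d r i) := by
    simpa only [haux] using hW
  simp only [haux]
  set c : ℂ := ((2 / r (Fin.last d) : ℚ) : ℂ) with hc
  set y : Fin d → ℂ := fun i : Fin d => z i.castSucc / z (Fin.last d) ^ nsA d r i with hy
  have hcne : c ≠ 0 := by
    rw [hc]
    exact_mod_cast div_ne_zero two_ne_zero hrd
  have hane : ∀ i : Fin d, z (Fin.last d) ^ nsA d r i ≠ 0 := fun i => by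
    rw [Ne, Complex.cpow_eq_zero_iff]
    tauto
  have hcs : ∀ j : Fin d, (j.castSucc : Fin (d + 1)) ≠ Fin.last d :=
    fun j => (Fin.castSucc_lt_last j).ne
  -- Claim 1 : partials in the first d directions
  have claim1 : ∀ j : Fin d,
      deriv (fun w => W (Function.update z j.castSucc w)) (z j.castSucc)
        = z (Fin.last d) ^ c *
            (deriv (fun w => g (Function.update y j w)) (y j) *
              (z (Fin.last d) ^ nsA d r j)⁻¹) := by
    intro j
    have hfun : (fun w => W (Function.update z j.castSucc w))
        = fun w => z (Fin.last d) ^ c *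
            g (Function.update y j (w * (z (Fin.last d) ^ nsA d r j)⁻¹)) := by
      funext w
      have hlast : Function.update z j.castSucc w (Fin.last d) = z (Fin.last d) :=
        Function.update_of_ne (hcs j).symm _ _
      rw [hWa _ (by rw [hlast]; exact hzd), hlast]
      refine congrArg (fun t => z (Fin.last d) ^ c * g t) ?_
      funext i
      by_cases hij : i = j
      · subst hij
        rw [Function.update_self, Function.update_self, div_eq_mul_inv]
      · have : (i.castSucc : Fin (d + 1)) ≠ j.castSucc := by
          simpa [Fin.castSucc_inj] using hij
        rw [Function.update_of_ne this, Function.update_of_ne hij, hy]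
    have hG : HasDerivAt (fun w => g (Function.update y j w))
        (deriv (fun w => g (Function.update y j w)) (y j)) (y j) :=
      (ns_hasDerivAt_update g hg y j).differentiableAt.hasDerivAt
    have hinner : HasDerivAt (fun w : ℂ => w * (z (Fin.last d) ^ nsA d r j)⁻¹)
        ((z (Fin.last d) ^ nsA d r j)⁻¹) (z j.castSucc) := by
      simpa using (hasDerivAt_id (z j.castSucc)).mul_const ((z (Fin.last d) ^ nsA d r j)⁻¹)
    have hpt : z j.castSucc * (z (Fin.last d) ^ nsA d r j)⁻¹ = y j :=
      (div_eq_mul_inv _ _).symm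
    have hG' : HasDerivAt (fun w => g (Function.update y j w))
        (deriv (fun w => g (Function.update y j w)) (y j))
        ((fun w : ℂ => w * (z (Fin.last d) ^ nsA d r j)⁻¹) (z j.castSucc)) := by
      simpa only [hpt] using hG
    have hcomp := hG'.comp (z j.castSucc) hinner
    rw [hfun]
    exact (hcomp.const_mul (z (Fin.last d) ^ c)).deriv
  -- Claim 2 : partial in the last direction, given the others vanish
  have claim2 : (∀ j : Fin d, deriv (fun w => g (Function.update y j w)) (y j) = 0) →
      deriv (fun w => W (Function.update z (Fin.last d) w)) (z (Fin.last d))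
        = c * z (Fin.last d) ^ (c - 1) * g y := by
    intro hD
    have hfd0 : fderiv ℂ g y = 0 := ns_fderiv_eq_zero g hg y hD
    have hev : (fun w => W (Function.update z (Fin.last d) w)) =ᶠ[nhds (z (Fin.last d))]
        (fun w => w ^ c * g (fun i : Fin d => z i.castSucc * w ^ (-(nsA d r i)))) := by
      filter_upwards [eventually_ne_nhds hzd] with w hw
      rw [hWa _ (by rw [Function.update_self]; exact hw), Function.update_self]
      refine congrArg (fun t => w ^ c * g t) ?_
      funext i
      rw [Function.update_of_ne (hcs i), Complex.cpow_neg, div_eq_mul_inv]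
    rw [hev.deriv_eq]
    have h1 : HasDerivAt (fun w : ℂ => w ^ c) (c * z (Fin.last d) ^ (c - 1))
        (z (Fin.last d)) :=
      (Complex.hasStrictDerivAt_cpow_const hbranch).hasDerivAt
    have hφ : HasDerivAt (fun w => fun i : Fin d => z i.castSucc * w ^ (-(nsA d r i)))
        (fun i => z i.castSucc * (-(nsA d r i) * z (Fin.last d) ^ (-(nsA d r i) - 1)))
        (z (Fin.last d)) := by
      rw [hasDerivAt_pi]
      intro i
      exact ((Complex.hasStrictDerivAt_cpow_const hbranch).hasDerivAt).const_mul _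
    have hφval : (fun i : Fin d => z i.castSucc * z (Fin.last d) ^ (-(nsA d r i))) = y := by
      funext i
      rw [Complex.cpow_neg]
      exact (div_eq_mul_inv _ _).symm
    have hgf : HasFDerivAt g (fderiv ℂ g y)
        ((fun w => fun i : Fin d => z i.castSucc * w ^ (-(nsA d r i))) (z (Fin.last d))) := by
      simpa only [hφval] using (hg y).hasFDerivAt
    have h2 : HasDerivAt
        (fun w => g (fun i : Fin d => z i.castSucc * w ^ (-(nsA d r i)))) 0
        (z (Fin.last d)) := by
      have h3 := hgf.comp_hasDerivAt (z (Fin.last d)) hφ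
      rw [hfd0, ContinuousLinearMap.zero_apply] at h3
      exact h3
    have h12 : HasDerivAt (fun w : ℂ => w ^ c * g (fun i : Fin d => z i.castSucc * w ^ (-(nsA d r i))))
        (c * z (Fin.last d) ^ (c - 1) * g (fun i : Fin d => z i.castSucc * z (Fin.last d) ^ (-(nsA d r i))) + z (Fin.last d) ^ c * 0)
        (z (Fin.last d)) := h1.mul h2
    rw [h12.deriv]
    simp only [hφval, mul_zero, add_zero]
  constructor
  · intro h
    have hD : ∀ j : Fin d, deriv (fun w => g (Function.update y j w)) (y j) = 0 := by
      intro j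
      have h1 := h j.castSucc
      rw [claim1 j] at h1
      have h2 := (mul_eq_zero.mp h1).resolve_left hx
      exact (mul_eq_zero.mp h2).resolve_right (inv_ne_zero (hane j))
    refine ⟨?_, hD⟩
    have h2 := h (Fin.last d)
    rw [claim2 hD] at h2
    have hzc1 : z (Fin.last d) ^ (c - 1) ≠ 0 := by
      rw [Ne, Complex.cpow_eq_zero_iff]
      tauto
    exact (mul_eq_zero.mp h2).resolve_left (mul_ne_zero hcne hzc1)
  · rintro ⟨hg0, hD⟩
    intro i
    refine Fin.lastCases ?_ ?_ i
    · rw [claim2 hD, hg0, mul_zero]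
    · intro j
      rw [claim1 j, hD j, zero_mul, mul_zero]
end
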